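/- Let N ≥ 2, b₁, …, b_N ∈ ℝ, and for 2 ≤ m ≤ N define on (0,∞)^N × ℝ^N the left coalgebraic invariant C^[m](q,p) = Σ_{1 ≤ i < j ≤ m} [(qᵢ·pⱼ − qⱼ·pᵢ)² + bᵢ·qⱼ²/qᵢ² + bⱼ·qᵢ²/qⱼ²] + Σ_{j=1}^{m} bⱼ. Then C^[m] Poisson commutes with each of the three generators of the N degrees of freedom realisation of sl₂(ℝ): {C^[m], J₊} = {C^[m], J₋} = {C^[m], J₃} = 0, where J₊(q,p) = Σₖ (pₖ² + bₖ/qₖ²), J₋(q,p) = Σₖ qₖ², J₃(q,p) = Σₖ qₖ·pₖ, and the canonical Poisson bracket of two smooth functions F, G on (0,∞)^N × ℝ^N is {F,G} = Σₖ (∂F/∂qₖ·∂G/∂pₖ − ∂F/∂pₖ·∂G/∂qₖ). -/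

import Mathlib

open Finset

/-- Partial derivative of `F(q,p)` with respect to `qₖ`. -/
noncomputable def pderivQ {N : ℕ} (F : (Fin N → ℝ) → (Fin N → ℝ) → ℝ) (k : Fin N)
    (q p : Fin N → ℝ) : ℝ :=
  deriv (fun x => F (Function.update q k x) p) (q k)

/-- Partial derivative of `F(q,p)` with respect to `pₖ`. -/
noncomputable def pderivP {N : ℕ} (F : (Fin N → ℝ) → (Fin N → ℝ) → ℝ) (k : Fin N)
    (q p : Fin N → ℝ) : ℝ :=
  deriv (fun x => F q (Function.update p k x)) (p k)

/-- The canonical Poisson bracket `{F,G} = Σₖ (∂F/∂qₖ ∂G/∂pₖ − ∂F/∂pₖ ∂G/∂qₖ)`. -/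
noncomputable def poisson {N : ℕ} (F G : (Fin N → ℝ) → (Fin N → ℝ) → ℝ)
    (q p : Fin N → ℝ) : ℝ :=
  ∑ k, (pderivQ F k q p * pderivP G k q p - pderivP F k q p * pderivQ G k q p)

/-- The left coalgebraic invariant `C^[m]`. -/
noncomputable def Cleft {N : ℕ} (b : Fin N → ℝ) (m : ℕ)
    (q p : Fin N → ℝ) : ℝ :=
  (∑ t ∈ (Finset.univ : Finset (Fin N × Fin N)).filter
      (fun t => t.1 < t.2 ∧ t.2.val < m),
    ((q t.1 * p t.2 - q t.2 * p t.1) ^ 2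
      + b t.1 * (q t.2) ^ 2 / (q t.1) ^ 2 + b t.2 * (q t.1) ^ 2 / (q t.2) ^ 2))
  + ∑ j ∈ Finset.univ.filter (fun j : Fin N => j.val < m), b j

/- ### Auxiliary lemmas -/

lemma sum_update_eq {N : ℕ} (q : Fin N → ℝ) (k : Fin N) (g : Fin N → ℝ → ℝ) (x : ℝ) :
    ∑ l, g l (Function.update q k x l)
      = g k x + ∑ l ∈ univ.erase k, g l (q l) := by
  rw [← Finset.add_sum_erase _ _ (Finset.mem_univ k), Function.update_self]
  congr 1
  exact Finset.sum_congr rfl fun l hl => by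
    rw [Function.update_of_ne (Finset.ne_of_mem_erase hl)]

lemma hasDerivAt_const_div_sq (b x : ℝ) (hx : x ≠ 0) :
    HasDerivAt (fun y : ℝ => b / y ^ 2) (-2 * b / x ^ 3) x := by
  have h := (hasDerivAt_const x b).div (hasDerivAt_pow 2 x) (pow_ne_zero 2 hx)
  refine h.congr_deriv ?_
  field_simp
  ring

lemma auxQ (a c d e x : ℝ) (hx : x ≠ 0) :
    HasDerivAt (fun y : ℝ => (y * a - c) ^ 2 + d / y ^ 2 + e * y ^ 2)
      (2 * (x * a - c) * a - 2 * d / x ^ 3 + 2 * e * x) x := by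
  have h1 : HasDerivAt (fun y : ℝ => (y * a - c) ^ 2) (2 * (x * a - c) * a) x := by
    have h := (((hasDerivAt_id x).mul_const a).sub_const c).pow 2
    refine h.congr_deriv ?_
    simp only [id_eq]
    push_cast
    ring
  have h2 := hasDerivAt_const_div_sq d x hx
  have h3 : HasDerivAt (fun y : ℝ => e * y ^ 2) (2 * e * x) x := by
    have h := (hasDerivAt_pow 2 x).const_mul e
    refine h.congr_deriv ?_
    push_cast
    ring
  refine ((h1.add h2).add h3).congr_deriv ?_
  ring

lemma auxP (a c d x : ℝ) :
    HasDerivAt (fun y : ℝ => (y * a + c) ^ 2 + d) (2 * (x * a + c) * a) x := by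
  have h := ((((hasDerivAt_id x).mul_const a).add_const c).pow 2).add_const d
  refine h.congr_deriv ?_
  simp only [id_eq]
  push_cast
  ring

lemma sum_two {N : ℕ} (i j : Fin N) (h : i ≠ j) (f g : Fin N → ℝ) :
    ∑ k, (if k = i then f k else if k = j then g k else 0) = f i + g j := by
  have key : ∀ k, (if k = i then f k else if k = j then g k else 0)
      = (if k = i then f i else 0) + (if k = j then g j else 0) := by
    intro k
    by_cases h1 : k = i
    · subst h1; simp [h]
    · by_cases h2 : k = j
      · subst h2; simp [h1, Ne.symm h]
      · simp [h1, h2]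
  simp only [key, Finset.sum_add_distrib, Finset.sum_ite_eq' univ, mem_univ, if_true]

/- ### Derivatives of `Cleft` -/

lemma pderivQ_Cleft {N : ℕ} (b : Fin N → ℝ) (m : ℕ) (k : Fin N) (q p : Fin N → ℝ)
    (hq : ∀ l, q l ≠ 0) :
    pderivQ (Cleft b m) k q p
      = ∑ t ∈ (Finset.univ : Finset (Fin N × Fin N)).filter
          (fun t => t.1 < t.2 ∧ t.2.val < m),
        (if k = t.1 then
          2 * (q t.1 * p t.2 - q t.2 * p t.1) * p t.2
            - 2 * b t.1 * (q t.2) ^ 2 / (q t.1) ^ 3 + 2 * b t.2 * q t.1 / (q t.2) ^ 2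
        else if k = t.2 then
          -(2 * (q t.1 * p t.2 - q t.2 * p t.1) * p t.1)
            + 2 * b t.1 * q t.2 / (q t.1) ^ 2 - 2 * b t.2 * (q t.1) ^ 2 / (q t.2) ^ 3
        else 0) := by
  have hH : HasDerivAt (fun x => Cleft b m (Function.update q k x) p)
      (∑ t ∈ (Finset.univ : Finset (Fin N × Fin N)).filter
          (fun t => t.1 < t.2 ∧ t.2.val < m),
        (if k = t.1 then
          2 * (q t.1 * p t.2 - q t.2 * p t.1) * p t.2
            - 2 * b t.1 * (q t.2) ^ 2 / (q t.1) ^ 3 + 2 * b t.2 * q t.1 / (q t.2) ^ 2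
        else if k = t.2 then
          -(2 * (q t.1 * p t.2 - q t.2 * p t.1) * p t.1)
            + 2 * b t.1 * q t.2 / (q t.1) ^ 2 - 2 * b t.2 * (q t.1) ^ 2 / (q t.2) ^ 3
        else 0)) (q k) := by
    unfold Cleft
    apply HasDerivAt.add_const
    apply HasDerivAt.fun_sum
    intro t ht
    simp only [mem_filter, mem_univ, true_and] at ht
    have hne : t.1 ≠ t.2 := ne_of_lt ht.1
    by_cases h1 : k = t.1
    · have e1 : ∀ x : ℝ, Function.update q k x t.1 = x := fun x => by
        rw [← h1, Function.update_self]
      have e2 : ∀ x : ℝ, Function.update q k x t.2 = q t.2 := fun x =>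
        Function.update_of_ne (fun hc => hne ((hc.trans h1).symm)) _ _
      simp only [e1, e2, if_pos h1]
      have heq : (fun x : ℝ => (x * p t.2 - q t.2 * p t.1) ^ 2
            + b t.1 * (q t.2) ^ 2 / x ^ 2 + b t.2 * x ^ 2 / (q t.2) ^ 2)
          = fun x : ℝ => (x * p t.2 - q t.2 * p t.1) ^ 2
            + (b t.1 * (q t.2) ^ 2) / x ^ 2 + (b t.2 / (q t.2) ^ 2) * x ^ 2 := by
        funext x; ring
      rw [heq]
      have h := auxQ (p t.2) (q t.2 * p t.1) (b t.1 * (q t.2) ^ 2) (b t.2 / (q t.2) ^ 2)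
        (q k) (hq k)
      refine h.congr_deriv ?_
      rw [h1]
      have h2 := hq t.2
      field_simp
    · by_cases h2 : k = t.2
      · have e1 : ∀ x : ℝ, Function.update q k x t.1 = q t.1 := fun x => by
          refine Function.update_of_ne (fun hc => h1 ?_) _ _
          rw [hc]
        have e2 : ∀ x : ℝ, Function.update q k x t.2 = x := fun x => by
          rw [← h2, Function.update_self]
        simp only [e1, e2, if_neg h1, if_pos h2]
        have heq : (fun x : ℝ => (q t.1 * p t.2 - x * p t.1) ^ 2
              + b t.1 * x ^ 2 / (q t.1) ^ 2 + b t.2 * (q t.1) ^ 2 / x ^ 2)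
            = fun x : ℝ => (x * (-(p t.1)) - (-(q t.1 * p t.2))) ^ 2
              + (b t.2 * (q t.1) ^ 2) / x ^ 2 + (b t.1 / (q t.1) ^ 2) * x ^ 2 := by
          funext x; ring
        rw [heq]
        have h := auxQ (-(p t.1)) (-(q t.1 * p t.2)) (b t.2 * (q t.1) ^ 2)
          (b t.1 / (q t.1) ^ 2) (q k) (hq k)
        refine h.congr_deriv ?_
        rw [h2]
        have h3 := hq t.1
        field_simp
        ring
      · have e1 : ∀ x : ℝ, Function.update q k x t.1 = q t.1 := fun x => by
          refine Function.update_of_ne (fun hc => h1 ?_) _ _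
          rw [hc]
        have e2 : ∀ x : ℝ, Function.update q k x t.2 = q t.2 := fun x =>
          Function.update_of_ne (fun hc => h2 hc.symm) _ _
        simp only [e1, e2, if_neg h1, if_neg h2]
        exact hasDerivAt_const _ _
  rw [pderivQ, hH.deriv]

lemma pderivP_Cleft {N : ℕ} (b : Fin N → ℝ) (m : ℕ) (k : Fin N) (q p : Fin N → ℝ) :
    pderivP (Cleft b m) k q p
      = ∑ t ∈ (Finset.univ : Finset (Fin N × Fin N)).filter
          (fun t => t.1 < t.2 ∧ t.2.val < m),
        (if k = t.1 then
          -(2 * (q t.1 * p t.2 - q t.2 * p t.1) * q t.2)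
        else if k = t.2 then
          2 * (q t.1 * p t.2 - q t.2 * p t.1) * q t.1
        else 0) := by
  have hH : HasDerivAt (fun y => Cleft b m q (Function.update p k y))
      (∑ t ∈ (Finset.univ : Finset (Fin N × Fin N)).filter
          (fun t => t.1 < t.2 ∧ t.2.val < m),
        (if k = t.1 then
          -(2 * (q t.1 * p t.2 - q t.2 * p t.1) * q t.2)
        else if k = t.2 then
          2 * (q t.1 * p t.2 - q t.2 * p t.1) * q t.1
        else 0)) (p k) := by
    unfold Cleft
    apply HasDerivAt.add_const
    apply HasDerivAt.fun_sum
    intro t ht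
    simp only [mem_filter, mem_univ, true_and] at ht
    have hne : t.1 ≠ t.2 := ne_of_lt ht.1
    by_cases h1 : k = t.1
    · have e1 : ∀ y : ℝ, Function.update p k y t.1 = y := fun y => by
        rw [← h1, Function.update_self]
      have e2 : ∀ y : ℝ, Function.update p k y t.2 = p t.2 := fun y =>
        Function.update_of_ne (fun hc => hne ((hc.trans h1).symm)) _ _
      simp only [e1, e2, if_pos h1]
      have heq : (fun y : ℝ => (q t.1 * p t.2 - q t.2 * y) ^ 2
            + b t.1 * (q t.2) ^ 2 / (q t.1) ^ 2 + b t.2 * (q t.1) ^ 2 / (q t.2) ^ 2)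
          = fun y : ℝ => (y * (-(q t.2)) + q t.1 * p t.2) ^ 2
            + (b t.1 * (q t.2) ^ 2 / (q t.1) ^ 2 + b t.2 * (q t.1) ^ 2 / (q t.2) ^ 2) := by
        funext y; ring
      rw [heq]
      have h := auxP (-(q t.2)) (q t.1 * p t.2)
        (b t.1 * (q t.2) ^ 2 / (q t.1) ^ 2 + b t.2 * (q t.1) ^ 2 / (q t.2) ^ 2) (p k)
      refine h.congr_deriv ?_
      rw [h1]
      ring
    · by_cases h2 : k = t.2
      · have e1 : ∀ y : ℝ, Function.update p k y t.1 = p t.1 := fun y => by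
          refine Function.update_of_ne (fun hc => h1 ?_) _ _
          rw [hc]
        have e2 : ∀ y : ℝ, Function.update p k y t.2 = y := fun y => by
          rw [← h2, Function.update_self]
        simp only [e1, e2, if_neg h1, if_pos h2]
        have heq : (fun y : ℝ => (q t.1 * y - q t.2 * p t.1) ^ 2
              + b t.1 * (q t.2) ^ 2 / (q t.1) ^ 2 + b t.2 * (q t.1) ^ 2 / (q t.2) ^ 2)
            = fun y : ℝ => (y * q t.1 + (-(q t.2 * p t.1))) ^ 2
              + (b t.1 * (q t.2) ^ 2 / (q t.1) ^ 2 + b t.2 * (q t.1) ^ 2 / (q t.2) ^ 2) := by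
          funext y; ring
        rw [heq]
        have h := auxP (q t.1) (-(q t.2 * p t.1))
          (b t.1 * (q t.2) ^ 2 / (q t.1) ^ 2 + b t.2 * (q t.1) ^ 2 / (q t.2) ^ 2) (p k)
        refine h.congr_deriv ?_
        rw [h2]
        ring
      · have e1 : ∀ y : ℝ, Function.update p k y t.1 = p t.1 := fun y => by
          refine Function.update_of_ne (fun hc => h1 ?_) _ _
          rw [hc]
        have e2 : ∀ y : ℝ, Function.update p k y t.2 = p t.2 := fun y =>
          Function.update_of_ne (fun hc => h2 hc.symm) _ _
        simp only [e1, e2, if_neg h1, if_neg h2]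
        exact hasDerivAt_const _ _
  rw [pderivP, hH.deriv]

/- ### Derivatives of the generators -/

lemma pderivQ_Jplus {N : ℕ} (b : Fin N → ℝ) (k : Fin N) (q p : Fin N → ℝ)
    (hq : q k ≠ 0) :
    pderivQ (fun x y => ∑ l, ((y l) ^ 2 + b l / (x l) ^ 2)) k q p
      = -2 * b k / (q k) ^ 3 := by
  rw [pderivQ]
  have heq : (fun x => ∑ l, ((p l) ^ 2 + b l / (Function.update q k x l) ^ 2))
      = fun x => ((p k) ^ 2 + b k / x ^ 2)
          + ∑ l ∈ univ.erase k, ((p l) ^ 2 + b l / (q l) ^ 2) := by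
    funext x
    exact sum_update_eq q k (fun l z => (p l) ^ 2 + b l / z ^ 2) x
  rw [heq]
  have h := (((hasDerivAt_const_div_sq (b k) (q k) hq).const_add ((p k) ^ 2)).add_const
    (∑ l ∈ univ.erase k, ((p l) ^ 2 + b l / (q l) ^ 2)))
  exact h.deriv

lemma pderivP_Jplus {N : ℕ} (b : Fin N → ℝ) (k : Fin N) (q p : Fin N → ℝ) :
    pderivP (fun x y => ∑ l, ((y l) ^ 2 + b l / (x l) ^ 2)) k q p = 2 * p k := by
  rw [pderivP]
  have heq : (fun y => ∑ l, ((Function.update p k y l) ^ 2 + b l / (q l) ^ 2))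
      = fun y => (y ^ 2 + b k / (q k) ^ 2)
          + ∑ l ∈ univ.erase k, ((p l) ^ 2 + b l / (q l) ^ 2) := by
    funext y
    exact sum_update_eq p k (fun l z => z ^ 2 + b l / (q l) ^ 2) y
  rw [heq]
  have h1 : HasDerivAt (fun y : ℝ => y ^ 2) (2 * p k) (p k) := by
    have h := hasDerivAt_pow 2 (p k)
    refine h.congr_deriv ?_
    push_cast
    ring
  exact ((h1.add_const _).add_const _).deriv

lemma pderivQ_Jminus {N : ℕ} (k : Fin N) (q p : Fin N → ℝ) :
    pderivQ (fun x (_ : Fin N → ℝ) => ∑ l, (x l) ^ 2) k q p = 2 * q k := by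
  rw [pderivQ]
  have heq : (fun x => ∑ l, (Function.update q k x l) ^ 2)
      = fun x => x ^ 2 + ∑ l ∈ univ.erase k, (q l) ^ 2 := by
    funext x
    exact sum_update_eq q k (fun _ z => z ^ 2) x
  rw [heq]
  have h1 : HasDerivAt (fun x : ℝ => x ^ 2) (2 * q k) (q k) := by
    have h := hasDerivAt_pow 2 (q k)
    refine h.congr_deriv ?_
    push_cast
    ring
  exact (h1.add_const _).deriv

lemma pderivP_Jminus {N : ℕ} (k : Fin N) (q p : Fin N → ℝ) :
    pderivP (fun x (_ : Fin N → ℝ) => ∑ l, (x l) ^ 2) k q p = 0 := by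
  rw [pderivP]
  exact deriv_const _ _

lemma pderivQ_J3 {N : ℕ} (k : Fin N) (q p : Fin N → ℝ) :
    pderivQ (fun x y => ∑ l, x l * y l) k q p = p k := by
  rw [pderivQ]
  have heq : (fun x => ∑ l, Function.update q k x l * p l)
      = fun x => x * p k + ∑ l ∈ univ.erase k, q l * p l := by
    funext x
    exact sum_update_eq q k (fun l z => z * p l) x
  rw [heq]
  have h1 : HasDerivAt (fun x : ℝ => x * p k) (p k) (q k) := by
    have h := (hasDerivAt_id (q k)).mul_const (p k)
    refine h.congr_deriv ?_
    ring
  exact (h1.add_const _).deriv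

lemma pderivP_J3 {N : ℕ} (k : Fin N) (q p : Fin N → ℝ) :
    pderivP (fun x y => ∑ l, x l * y l) k q p = q k := by
  rw [pderivP]
  have heq : (fun y => ∑ l, q l * Function.update p k y l)
      = fun y => q k * y + ∑ l ∈ univ.erase k, q l * p l := by
    funext y
    exact sum_update_eq p k (fun l z => q l * z) y
  rw [heq]
  have h1 : HasDerivAt (fun y : ℝ => q k * y) (q k) (p k) := by
    have h := (hasDerivAt_id (p k)).const_mul (q k)
    refine h.congr_deriv ?_
    ring
  exact (h1.add_const _).deriv

theorem Cleft_poisson_commutes_with_generators (N : ℕ) (hN : 2 ≤ N)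
    (b : Fin N → ℝ) (m : ℕ) (hm : 2 ≤ m) (hmN : m ≤ N)
    (q p : Fin N → ℝ) (hq : ∀ k, 0 < q k) :
    poisson (Cleft b m) (fun x y => ∑ k, ((y k) ^ 2 + b k / (x k) ^ 2)) q p = 0
    ∧ poisson (Cleft b m) (fun x _ => ∑ k, (x k) ^ 2) q p = 0
    ∧ poisson (Cleft b m) (fun x y => ∑ k, x k * y k) q p = 0 := by
  have hq' : ∀ l, q l ≠ 0 := fun l => ne_of_gt (hq l)
  set S : Finset (Fin N × Fin N) :=
    (Finset.univ : Finset (Fin N × Fin N)).filter (fun t => t.1 < t.2 ∧ t.2.val < m) with hS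
  -- abbreviations for the Cleft partial derivatives
  set DQ : Fin N × Fin N → Fin N → ℝ := fun t k =>
    (if k = t.1 then
      2 * (q t.1 * p t.2 - q t.2 * p t.1) * p t.2
        - 2 * b t.1 * (q t.2) ^ 2 / (q t.1) ^ 3 + 2 * b t.2 * q t.1 / (q t.2) ^ 2
    else if k = t.2 then
      -(2 * (q t.1 * p t.2 - q t.2 * p t.1) * p t.1)
        + 2 * b t.1 * q t.2 / (q t.1) ^ 2 - 2 * b t.2 * (q t.1) ^ 2 / (q t.2) ^ 3
    else 0) with hDQ
  set DP : Fin N × Fin N → Fin N → ℝ := fun t k =>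
    (if k = t.1 then
      -(2 * (q t.1 * p t.2 - q t.2 * p t.1) * q t.2)
    else if k = t.2 then
      2 * (q t.1 * p t.2 - q t.2 * p t.1) * q t.1
    else 0) with hDP
  have hCQ : ∀ k, pderivQ (Cleft b m) k q p = ∑ t ∈ S, DQ t k := fun k =>
    pderivQ_Cleft b m k q p hq'
  have hCP : ∀ k, pderivP (Cleft b m) k q p = ∑ t ∈ S, DP t k := fun k =>
    pderivP_Cleft b m k q p
  have key : ∀ (gq gp : Fin N → ℝ),
      (∀ t ∈ S, (2 * (q t.1 * p t.2 - q t.2 * p t.1) * p t.2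
          - 2 * b t.1 * (q t.2) ^ 2 / (q t.1) ^ 3 + 2 * b t.2 * q t.1 / (q t.2) ^ 2)
            * gp t.1
          - (-(2 * (q t.1 * p t.2 - q t.2 * p t.1) * q t.2)) * gq t.1
        + ((-(2 * (q t.1 * p t.2 - q t.2 * p t.1) * p t.1)
          + 2 * b t.1 * q t.2 / (q t.1) ^ 2 - 2 * b t.2 * (q t.1) ^ 2 / (q t.2) ^ 3)
            * gp t.2
          - (2 * (q t.1 * p t.2 - q t.2 * p t.1) * q t.1) * gq t.2) = 0) →
      ∑ k, ((∑ t ∈ S, DQ t k) * gp k - (∑ t ∈ S, DP t k) * gq k) = 0 := by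
    intro gq gp hcancel
    have step1 : ∀ k, (∑ t ∈ S, DQ t k) * gp k - (∑ t ∈ S, DP t k) * gq k
        = ∑ t ∈ S, (DQ t k * gp k - DP t k * gq k) := by
      intro k
      rw [Finset.sum_mul, Finset.sum_mul, ← Finset.sum_sub_distrib]
    simp only [step1]
    rw [Finset.sum_comm]
    apply Finset.sum_eq_zero
    intro t ht
    have hne : t.1 ≠ t.2 := by
      have := (Finset.mem_filter.mp ht).2.1
      exact ne_of_lt this
    have step2 : ∀ k, DQ t k * gp k - DP t k * gq k
        = if k = t.1 then
            ((2 * (q t.1 * p t.2 - q t.2 * p t.1) * p t.2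
              - 2 * b t.1 * (q t.2) ^ 2 / (q t.1) ^ 3 + 2 * b t.2 * q t.1 / (q t.2) ^ 2)
                * gp k
              - (-(2 * (q t.1 * p t.2 - q t.2 * p t.1) * q t.2)) * gq k)
          else if k = t.2 then
            ((-(2 * (q t.1 * p t.2 - q t.2 * p t.1) * p t.1)
              + 2 * b t.1 * q t.2 / (q t.1) ^ 2 - 2 * b t.2 * (q t.1) ^ 2 / (q t.2) ^ 3)
                * gp k
              - (2 * (q t.1 * p t.2 - q t.2 * p t.1) * q t.1) * gq k)
          else 0 := by
      intro k
      simp only [hDQ, hDP]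
      split_ifs <;> ring
    simp only [step2]
    rw [sum_two t.1 t.2 hne]
    exact hcancel t ht
  refine ⟨?_, ?_, ?_⟩
  · -- J₊
    rw [poisson]
    have hterm : ∀ k, pderivQ (Cleft b m) k q p
          * pderivP (fun x y => ∑ l, ((y l) ^ 2 + b l / (x l) ^ 2)) k q p
        - pderivP (Cleft b m) k q p
          * pderivQ (fun x y => ∑ l, ((y l) ^ 2 + b l / (x l) ^ 2)) k q p
        = (∑ t ∈ S, DQ t k) * (2 * p k) - (∑ t ∈ S, DP t k) * (-2 * b k / (q k) ^ 3) := by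
      intro k
      rw [hCQ, hCP, pderivP_Jplus, pderivQ_Jplus b k q p (hq' k)]
    rw [Finset.sum_congr rfl fun k _ => hterm k]
    apply key (fun k => -2 * b k / (q k) ^ 3) (fun k => 2 * p k)
    intro t ht
    have h1 := hq' t.1
    have h2 := hq' t.2
    field_simp
    ring
  · -- J₋
    rw [poisson]
    have hterm : ∀ k, pderivQ (Cleft b m) k q p
          * pderivP (fun x (_ : Fin N → ℝ) => ∑ l, (x l) ^ 2) k q p
        - pderivP (Cleft b m) k q p
          * pderivQ (fun x (_ : Fin N → ℝ) => ∑ l, (x l) ^ 2) k q p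
        = (∑ t ∈ S, DQ t k) * 0 - (∑ t ∈ S, DP t k) * (2 * q k) := by
      intro k
      rw [hCQ, hCP, pderivP_Jminus, pderivQ_Jminus]
    rw [Finset.sum_congr rfl fun k _ => hterm k]
    apply key (fun k => 2 * q k) (fun _ => 0)
    intro t ht
    ring
  · -- J₃
    rw [poisson]
    have hterm : ∀ k, pderivQ (Cleft b m) k q p
          * pderivP (fun x y => ∑ l, x l * y l) k q p
        - pderivP (Cleft b m) k q p
          * pderivQ (fun x y => ∑ l, x l * y l) k q p
        = (∑ t ∈ S, DQ t k) * q k - (∑ t ∈ S, DP t k) * p k := by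
      intro k
      rw [hCQ, hCP, pderivP_J3, pderivQ_J3]
    rw [Finset.sum_congr rfl fun k _ => hterm k]
    apply key (fun k => p k) (fun k => q k)
    intro t ht
    have h1 := hq' t.1
    have h2 := hq' t.2
    field_simp
    ring
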